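/- Let u : ℝ²∖{0} → ℂ satisfy Ku = u and Σ₂^c u = u (pointwise), and define v(x,y) = w(x,y)^{−1/2} · u(x,y), where w(x,y) = (x+iy)/|x+iy| and the principal branch of the complex square root is used (v = e^{−iθ/2} u for θ ∈ (−π,π)). Then on the slit plane ℝ² ∖ {(x,0) : x ≤ 0}, the function v is real-valued, conj(v(x,y)) = v(x,y), and symmetric with respect to the horizontal axis, v(x,−y) = v(x,y). -/

import Mathlib

noncomputable section

/-- The unimodular phase `w(x,y) = (x+iy)/|x+iy|` (that is, `e^{iθ}`). -/
def wphase (p : ℝ × ℝ) : ℂ :=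
  (p.1 + p.2 * Complex.I) / (‖((p.1 : ℂ) + p.2 * Complex.I)‖ : ℂ)

/-- The antilinear operator `K`: `(Ku)(x,y) = w(x,y) · conj(u(x,y))`,
i.e. `Ku = e^{iθ} ū` in polar coordinates. -/
def Kop (u : ℝ × ℝ → ℂ) : ℝ × ℝ → ℂ :=
  fun p => wphase p * (starRingEnd ℂ) (u p)

/-- The antilinear symmetry `Σ₂^c = ΓΣ₂`: `(Σ₂^c u)(x,y) = conj(u(x,−y))`. -/
def Sigma2c (u : ℝ × ℝ → ℂ) : ℝ × ℝ → ℂ :=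
  fun p => (starRingEnd ℂ) (u (p.1, -p.2))

/-- Let `u` satisfy `Ku = u` and `Σ₂^c u = u` on `ℝ²∖{0}`, and set
`v(x,y) = w(x,y)^{−1/2}·u(x,y)` (principal branch of the complex square root,
so `v = e^{−iθ/2}u` for `θ ∈ (−π,π)`). Then on the slit plane
`ℝ² ∖ {(x,0) : x ≤ 0}`, `v` is real-valued and symmetric with respect to the
horizontal axis: `conj(v(x,y)) = v(x,y)` and `v(x,−y) = v(x,y)`. -/
theorem slit_plane_real_symmetric (u : ℝ × ℝ → ℂ)
    (hKu : ∀ p : ℝ × ℝ, p ≠ 0 → Kop u p = u p)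
    (hSu : ∀ p : ℝ × ℝ, p ≠ 0 → Sigma2c u p = u p)
    (v : ℝ × ℝ → ℂ) (hv : ∀ p : ℝ × ℝ, v p = wphase p ^ (-(1 / 2) : ℂ) * u p)
    (x y : ℝ) (hxy : ¬ (x ≤ 0 ∧ y = 0)) :
    (starRingEnd ℂ) (v (x, y)) = v (x, y) ∧ v (x, -y) = v (x, y) := by
  set z : ℂ := (x : ℂ) + (y : ℂ) * Complex.I with hzdef
  have hp0 : ((x, y) : ℝ × ℝ) ≠ 0 := by
    intro h
    rw [Prod.ext_iff] at h
    exact hxy ⟨le_of_eq h.1, h.2⟩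
  have hz : z ≠ 0 := by
    intro h
    have h1 : x = 0 ∧ y = 0 := by simpa [hzdef, Complex.ext_iff] using h
    exact hxy ⟨h1.1.le, h1.2⟩
  have habsz : (0:ℝ) < ‖z‖ := norm_pos_iff.mpr hz
  set w : ℂ := wphase (x, y) with hwdef
  have hwz : w = z / ‖z‖ := rfl
  have habsw : ‖w‖ = 1 := by
    rw [hwz, norm_div]
    simp [habsz.ne']
  have hw0 : w ≠ 0 := by
    intro h; rw [h] at habsw; simp at habsw
  have hwarg : w.arg ≠ Real.pi := by
    have h1 : w = ((‖z‖)⁻¹ : ℝ) * z := by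
      rw [hwz]; push_cast; ring
    have h2 : w.arg = z.arg := by
      rw [h1]; exact Complex.arg_real_mul z (by positivity)
    rw [h2]
    intro h
    rw [Complex.arg_eq_pi_iff] at h
    simp [hzdef] at h
    exact hxy ⟨h.1.le, h.2⟩
  have hconjw : (starRingEnd ℂ) w = w⁻¹ := (Complex.inv_eq_conj habsw).symm
  set n : ℂ := (-(1 / 2) : ℂ) with hndef
  have hconjn : (starRingEnd ℂ) n = n := by
    have : n = ((-(1/2) : ℝ) : ℂ) := by rw [hndef]; norm_num
    rw [this, Complex.conj_ofReal]
  -- conj (w ^ n) = (w ^ n)⁻¹ * ... key: conj (w^n) = (w⁻¹)^n = (w^n)⁻¹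
  have hkey : (starRingEnd ℂ) (w ^ n) = (w ^ n)⁻¹ := by
    have := Complex.conj_cpow w n hwarg
    rw [hconjn] at this
    rw [← this, hconjw, Complex.inv_cpow w n hwarg]
  -- w^n * w^n = w⁻¹
  have hsq : w ^ n * w ^ n = w⁻¹ := by
    rw [← Complex.cpow_add _ _ hw0]
    have : n + n = (-1 : ℂ) := by rw [hndef]; ring
    rw [this]
    simpa using Complex.cpow_neg_one w
  -- conj u = w⁻¹ * u
  have hconju : (starRingEnd ℂ) (u (x, y)) = w⁻¹ * u (x, y) := by
    have h := hKu (x, y) hp0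
    unfold Kop at h
    rw [← hwdef] at h
    field_simp at h ⊢
    rw [mul_comm]
    exact (mul_comm _ _).trans h
  have hwn0 : w ^ n ≠ 0 := by
    simp [Complex.cpow_eq_zero_iff, hw0]
  have hreal : (starRingEnd ℂ) (v (x, y)) = v (x, y) := by
    rw [hv (x, y), ← hwdef, map_mul, hkey, hconju, ← hsq]
    field_simp
  refine ⟨hreal, ?_⟩
  -- wphase (x, -y) = conj w
  have hwneg : wphase (x, -y) = (starRingEnd ℂ) w := by
    have hc : ((x : ℂ) + (-y : ℝ) * Complex.I) = (starRingEnd ℂ) z := by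
      rw [hzdef]; push_cast; simp [Complex.ext_iff]
    unfold wphase
    simp only
    rw [hc, Complex.norm_conj, hwz, map_div₀]
    congr 1
    simp [Complex.ext_iff]
  have huneg : u (x, -y) = (starRingEnd ℂ) (u (x, y)) := by
    have h := hSu (x, y) hp0
    unfold Sigma2c at h
    simp only at h
    rw [← h]; simp
  have : v (x, -y) = (starRingEnd ℂ) (v (x, y)) := by
    rw [hv (x, -y), hv (x, y), ← hwdef, hwneg, huneg, map_mul]
    congr 1
    rw [hconjw, Complex.inv_cpow w n hwarg, ← hkey]
  rw [this, hreal]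

end
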